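/- Fiberwise form of Prop. 4.8 (torsion-free affine equations): Let (C, L) be a fiberwise pseudo-Finsler datum on ℝ^n (n ≥ 2) and let ℓ = (ℓ_i) : C → ℝ^n be smooth, positively 0-homogeneous, with ℓ_a y^a = 0 (the role played by the mean Landsberg tensor). For a smooth positively 2-homogeneous Z : C → ℝ^n set B_i := ((n+2)/2)(y_a/L) Z^a_{·i} − C_a Z^a_{·i} − Z^a_{·a·i}. Then the following are equivalent on C: (a) (ℓ_a + B_a)(δ_i^a y^j − y^a δ_i^j) = 0 for all i, j, where δ_i^a is the Kronecker delta (this is the affine equation for the symmetric difference ∂̇Z); (b) ℓ_i + B_i = 0 for all i; (c) Z satisfies both ℓ_i + ((n+2)/2)(y_a/L) Z^a_{·i} − C_a Z^a_{·i} − { (n+2)(y_a/L) Z^a − 2 C_a Z^a }_{·i} = 0 and (n+2)(y_a/L) Z^a − 2 C_a Z^a − Z^a_{·a} = 0. -/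

import Mathlib

open scoped BigOperators

noncomputable section

/-- Partial derivative `∂f/∂y^i`. -/
def pd {n : ℕ} (f : (Fin n → ℝ) → ℝ) (i : Fin n) : (Fin n → ℝ) → ℝ :=
  fun y => fderiv ℝ f y (Pi.single i 1)

/-- `C` is a conic set: stable under positive scalings. -/
def Conic {n : ℕ} (C : Set (Fin n → ℝ)) : Prop :=
  ∀ ⦃y⦄, y ∈ C → ∀ ⦃t : ℝ⦄, 0 < t → t • y ∈ C

/-- `f` is positively `α`-homogeneous on `C`. -/
def PosHom {n : ℕ} (α : ℝ) (C : Set (Fin n → ℝ)) (f : (Fin n → ℝ) → ℝ) : Prop :=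
  ∀ y ∈ C, ∀ t : ℝ, 0 < t → f (t • y) = t ^ α * f y

/-- Vector-valued positively `α`-homogeneous map on `C`. -/
def PosHomMap {n : ℕ} (α : ℝ) (C : Set (Fin n → ℝ)) (Z : (Fin n → ℝ) → Fin n → ℝ) : Prop :=
  ∀ y ∈ C, ∀ t : ℝ, 0 < t → Z (t • y) = t ^ α • Z y

/-- Fundamental tensor `g_ij(y) = (1/2) L_{·i·j}(y)`. -/
def gmet {n : ℕ} (L : (Fin n → ℝ) → ℝ) (y : Fin n → ℝ) : Matrix (Fin n) (Fin n) ℝ :=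
  Matrix.of fun i j => (1 / 2) * pd (pd L i) j y

/-- Inverse fundamental tensor `g^{ij}`. -/
def ginv {n : ℕ} (L : (Fin n → ℝ) → ℝ) (y : Fin n → ℝ) : Matrix (Fin n) (Fin n) ℝ :=
  (gmet L y)⁻¹

/-- Lowered index `y_i = g_{ia} y^a`. -/
def yLow {n : ℕ} (L : (Fin n → ℝ) → ℝ) (y : Fin n → ℝ) (i : Fin n) : ℝ :=
  ∑ a, gmet L y i a * y a

/-- Cartan tensor `C_{ijk} = (1/2) g_{ij·k}`. -/
def cartan {n : ℕ} (L : (Fin n → ℝ) → ℝ) (i j k : Fin n) : (Fin n → ℝ) → ℝ :=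
  fun y => (1 / 2) * pd (fun z => gmet L z i j) k y

/-- Mean Cartan tensor `C_i = g^{ab} C_{abi}`. -/
def meanCartan {n : ℕ} (L : (Fin n → ℝ) → ℝ) (i : Fin n) : (Fin n → ℝ) → ℝ :=
  fun y => ∑ a, ∑ b, ginv L y a b * cartan L a b i y

/-- A fiberwise pseudo-Finsler datum on `ℝ^n`. -/
structure FinslerDatum (n : ℕ) (C : Set (Fin n → ℝ)) (L : (Fin n → ℝ) → ℝ) : Prop where
  openC : IsOpen C
  nzC : ∀ y ∈ C, y ≠ 0
  conicC : Conic C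
  smoothL : ContDiffOn ℝ (⊤ : ℕ∞) L C
  homL : PosHom 2 C L
  LneC : ∀ y ∈ C, L y ≠ 0
  gInvC : ∀ y ∈ C, IsUnit (gmet L y).det

/-- Closure of `C` inside `ℝ^n ∖ {0}`. -/
def clos {n : ℕ} (C : Set (Fin n → ℝ)) : Set (Fin n → ℝ) := closure C \ {0}

/-- A proper fiberwise datum on `ℝ^n`. -/
structure ProperDatum (n : ℕ) (C U : Set (Fin n → ℝ)) (L : (Fin n → ℝ) → ℝ) : Prop where
  connC : IsConnected C
  openC : IsOpen C
  conicC : Conic C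
  nzC : ∀ y ∈ C, y ≠ 0
  openU : IsOpen U
  conicU : Conic U
  nzU : ∀ y ∈ U, y ≠ 0
  closSub : clos C ⊆ U
  smoothL : ContDiffOn ℝ (⊤ : ℕ∞) L U
  homL : PosHom 2 U L
  posC : ∀ y ∈ C, 0 < L y
  zeroBd : ∀ y ∈ clos C \ C, L y = 0
  gInvU : ∀ y ∈ U, IsUnit (gmet L y).det

/-- Lorentzian signature `(+,−,…,−)` of a symmetric matrix, via Sylvester normal form. -/
def LorentzSignature {n : ℕ} (g : Matrix (Fin n) (Fin n) ℝ) : Prop :=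
  ∃ P : Matrix (Fin n) (Fin n) ℝ, IsUnit P.det ∧
    P.transpose * g * P = Matrix.diagonal (fun i : Fin n => if (i : ℕ) = 0 then (1 : ℝ) else -1)

/-- A properly Lorentz fiberwise datum on `ℝ^n`. -/
structure LorentzDatum (n : ℕ) (C U : Set (Fin n → ℝ)) (L : (Fin n → ℝ) → ℝ)
    extends ProperDatum n C U L : Prop where
  lorentz : ∀ y ∈ clos C, LorentzSignature (gmet L y)
  halfspace : ∃ φ : (Fin n → ℝ) →ₗ[ℝ] ℝ, φ ≠ 0 ∧ ∀ v ∈ clos C, 0 < φ v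

/-- `σ^Z = y_a Z^a / L`. -/
def sigmaZ {n : ℕ} (L : (Fin n → ℝ) → ℝ) (Z : (Fin n → ℝ) → Fin n → ℝ) :
    (Fin n → ℝ) → ℝ :=
  fun y => (∑ a, yLow L y a * Z y a) / L y

/-- `K^Z_i = −(2/(n+2)) (2 C_{a·i} Z^a + C_a Z^a_{·i})`. -/
def Kten {n : ℕ} (L : (Fin n → ℝ) → ℝ) (Z : (Fin n → ℝ) → Fin n → ℝ) (i : Fin n) :
    (Fin n → ℝ) → ℝ :=
  fun y => -(2 / ((n : ℝ) + 2)) *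
    (2 * ∑ a, pd (meanCartan L a) i y * Z y a + ∑ a, meanCartan L a y * pd (fun z => Z z a) i y)

/-- `B^Z_i := ((n+2)/2)(y_a/L) Z^a_{·i} − C_a Z^a_{·i} − Z^a_{·a·i}`. -/
def Bfield {n : ℕ} (L : (Fin n → ℝ) → ℝ) (Z : (Fin n → ℝ) → Fin n → ℝ)
    (y : Fin n → ℝ) (i : Fin n) : ℝ :=
  (((n : ℝ) + 2) / 2) * ∑ a, yLow L y a / L y * pd (fun z => Z z a) i y
    - ∑ a, meanCartan L a y * pd (fun z => Z z a) i y
    - ∑ a, pd (fun z => pd (fun w => Z w a) a z) i y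

lemma sum_single_smul {n : ℕ} (y : Fin n → ℝ) :
    (∑ i, y i • (Pi.single i 1 : Fin n → ℝ)) = y := by
  funext j
  simp [Pi.single_apply, Finset.sum_ite_eq']

/-- Euler's theorem at a point. -/
lemma euler_aux {n : ℕ} {f : (Fin n → ℝ) → ℝ} {y : Fin n → ℝ} {α : ℝ}
    (hf : DifferentiableAt ℝ f y)
    (hhom : ∀ t : ℝ, 0 < t → f (t • y) = t ^ α * f y) :
    ∑ i, y i * pd f i y = α * f y := by
  have hc : HasDerivAt (fun t : ℝ => t • y) y 1 := by
    simpa using (hasDerivAt_id (1:ℝ)).smul_const y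
  have h1 : HasDerivAt (fun t : ℝ => f (t • y)) (fderiv ℝ f y y) 1 := by
    have hf' : HasFDerivAt f (fderiv ℝ f y) ((1:ℝ) • y) := by
      rw [one_smul]; exact hf.hasFDerivAt
    exact hf'.comp_hasDerivAt (1:ℝ) hc
  have h2 : HasDerivAt (fun t : ℝ => t ^ α * f y) (α * f y) 1 := by
    have := (Real.hasDerivAt_rpow_const (x := (1:ℝ)) (p := α) (Or.inl one_ne_zero)).mul_const (f y)
    simpa using this
  have hev : (fun t : ℝ => f (t • y)) =ᶠ[nhds (1:ℝ)] fun t => t ^ α * f y := by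
    filter_upwards [eventually_gt_nhds (by norm_num : (0:ℝ) < 1)] with t ht
    exact hhom t ht
  have h2' : HasDerivAt (fun t : ℝ => f (t • y)) (α * f y) 1 :=
    h2.congr_of_eventuallyEq hev
  have heq : fderiv ℝ f y y = α * f y := h1.unique h2'
  calc ∑ i, y i * pd f i y = fderiv ℝ f y (∑ i, y i • (Pi.single i 1 : Fin n → ℝ)) := by
        rw [map_sum]
        refine Finset.sum_congr rfl fun i _ => ?_
        rw [map_smul]; rfl
    _ = α * f y := by rw [sum_single_smul]; exact heq

/-- Derivative of a 2-homogeneous function is 1-homogeneous. -/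
lemma pd_hom2 {n : ℕ} {C : Set (Fin n → ℝ)} (hC : IsOpen C)
    {f : (Fin n → ℝ) → ℝ}
    (hf : ∀ z ∈ C, DifferentiableAt ℝ f z)
    (hhom : ∀ z ∈ C, ∀ t : ℝ, 0 < t → f (t • z) = t ^ (2:ℝ) * f z)
    {y : Fin n → ℝ} (hy : y ∈ C) {t : ℝ} (ht : 0 < t) (hty : t • y ∈ C) (i : Fin n) :
    pd f i (t • y) = t * pd f i y := by
  have hsm : HasFDerivAt (fun z : Fin n → ℝ => t • z)
      (t • ContinuousLinearMap.id ℝ (Fin n → ℝ)) y := (hasFDerivAt_id y).const_smul t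
  have hg : HasFDerivAt (fun z => f (t • z))
      ((fderiv ℝ f (t • y)).comp (t • ContinuousLinearMap.id ℝ (Fin n → ℝ))) y :=
    (hf _ hty).hasFDerivAt.comp y hsm
  have hg' : HasFDerivAt (fun z => f (t • z)) (t ^ (2:ℝ) • fderiv ℝ f y) y := by
    have h0 : HasFDerivAt (fun z => t ^ (2:ℝ) * f z) (t ^ (2:ℝ) • fderiv ℝ f y) y :=
      (hf _ hy).hasFDerivAt.const_mul _
    refine h0.congr_of_eventuallyEq ?_
    filter_upwards [hC.mem_nhds hy] with z hz
    exact hhom z hz t ht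
  have := hg.unique hg'
  have happ := congrArg (fun (T : (Fin n → ℝ) →L[ℝ] ℝ) => T (Pi.single i 1)) this
  simp only [ContinuousLinearMap.comp_apply, ContinuousLinearMap.smul_apply,
    ContinuousLinearMap.id_apply, map_smul, smul_eq_mul] at happ
  have ht2 : t ^ (2:ℝ) = t * t := by
    rw [show (2:ℝ) = ((2:ℕ):ℝ) by norm_num, Real.rpow_natCast]; ring
  rw [ht2] at happ
  unfold pd
  apply mul_left_cancel₀ (ne_of_gt ht)
  rw [happ]; ring

lemma pd_sum {n : ℕ} {F : Fin n → (Fin n → ℝ) → ℝ} {y : Fin n → ℝ}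
    (h : ∀ a, DifferentiableAt ℝ (F a) y) (i : Fin n) :
    pd (fun z => ∑ a, F a z) i y = ∑ a, pd (F a) i y := by
  unfold pd
  rw [fderiv_fun_sum (fun a _ => h a), ContinuousLinearMap.sum_apply]

lemma sum_mul_sum_comm {n : ℕ} (y c : Fin n → ℝ) (P : Fin n → Fin n → ℝ) :
    ∑ i, y i * ∑ a, c a * P a i = ∑ a, c a * ∑ i, y i * P a i := by
  simp only [Finset.mul_sum]
  rw [Finset.sum_comm]
  exact Finset.sum_congr rfl fun a _ => Finset.sum_congr rfl fun i _ => by ring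

/-- **Fiberwise form of Prop. 4.8** (torsion-free affine equations). For a fiberwise
pseudo-Finsler datum `(C, L)`, a 0-homogeneous `ℓ` with `ℓ_a y^a = 0` and a 2-homogeneous
`Z`, the following are equivalent on `C`:
(a) `(ℓ_a + B_a)(δ_i^a y^j − y^a δ_i^j) = 0`;
(b) `ℓ_i + B_i = 0`;
(c) the pair of torsion-free affine equations (4.7) and (4.8). -/
theorem torsion_free_affine_equations_prop_4_8
    {n : ℕ} (hn : 2 ≤ n) (C : Set (Fin n → ℝ)) (L : (Fin n → ℝ) → ℝ)
    (hD : FinslerDatum n C L)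
    (ℓ : (Fin n → ℝ) → Fin n → ℝ)
    (hℓsmooth : ContDiffOn ℝ (⊤ : ℕ∞) ℓ C) (hℓhom : PosHomMap 0 C ℓ)
    (hℓy : ∀ y ∈ C, ∑ a, ℓ y a * y a = 0)
    (Z : (Fin n → ℝ) → Fin n → ℝ)
    (hZsmooth : ContDiffOn ℝ (⊤ : ℕ∞) Z C) (hZhom : PosHomMap 2 C Z) :
    ((∀ y ∈ C, ∀ i j : Fin n,
        ∑ a, (ℓ y a + Bfield L Z y a) *
          ((if a = i then (1 : ℝ) else 0) * y j - y a * (if j = i then (1 : ℝ) else 0)) = 0)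
      ↔ (∀ y ∈ C, ∀ i : Fin n, ℓ y i + Bfield L Z y i = 0))
    ∧ ((∀ y ∈ C, ∀ i : Fin n, ℓ y i + Bfield L Z y i = 0)
      ↔ ((∀ y ∈ C, ∀ i : Fin n,
            ℓ y i + (((n : ℝ) + 2) / 2) * ∑ a, yLow L y a / L y * pd (fun z => Z z a) i y
              - ∑ a, meanCartan L a y * pd (fun z => Z z a) i y
              - pd (fun z => ((n : ℝ) + 2) * ∑ a, yLow L z a / L z * Z z a
                  - 2 * ∑ a, meanCartan L a z * Z z a) i y = 0)
          ∧ (∀ y ∈ C,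
            ((n : ℝ) + 2) * ∑ a, yLow L y a / L y * Z y a
              - 2 * ∑ a, meanCartan L a y * Z y a
              - ∑ a, pd (fun z => Z z a) a y = 0))) := by
  have hC : IsOpen C := hD.openC
  -- component smoothness facts
  have hZc : ∀ z ∈ C, ∀ a : Fin n, ContDiffAt ℝ (⊤ : ℕ∞) (fun w => Z w a) z := by
    intro z hz a
    exact (contDiffAt_pi.mp (hZsmooth.contDiffAt (hC.mem_nhds hz))) a
  have hZd : ∀ z ∈ C, ∀ a : Fin n, DifferentiableAt ℝ (fun w => Z w a) z :=
    fun z hz a => (hZc z hz a).differentiableAt (by simp)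
  have hdZc : ∀ z ∈ C, ∀ a i : Fin n,
      ContDiffAt ℝ (⊤ : ℕ∞) (fun w => pd (fun v => Z v a) i w) z := by
    intro z hz a i
    exact ((hZc z hz a).fderiv_right (le_of_eq ENat.coe_top_add_one)).clm_apply contDiffAt_const
  have hdZd : ∀ z ∈ C, ∀ a i : Fin n,
      DifferentiableAt ℝ (fun w => pd (fun v => Z v a) i w) z :=
    fun z hz a i => (hdZc z hz a i).differentiableAt (by simp)
  -- homogeneity of components
  have hZhom' : ∀ z ∈ C, ∀ a : Fin n, ∀ t : ℝ, 0 < t →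
      Z (t • z) a = t ^ (2:ℝ) * Z z a := by
    intro z hz a t ht
    rw [hZhom z hz t ht]; simp
  -- Euler for Z components (degree 2)
  have eulerZ : ∀ y ∈ C, ∀ a : Fin n,
      ∑ i, y i * pd (fun z => Z z a) i y = 2 * Z y a := by
    intro y hy a
    exact euler_aux (hZd y hy a) (fun t ht => hZhom' y hy a t ht)
  -- Euler for the divergence-type terms (degree 1)
  have eulerψ : ∀ y ∈ C, ∀ a : Fin n,
      ∑ i, y i * pd (fun z => pd (fun w => Z w a) a z) i y
        = pd (fun w => Z w a) a y := by
    intro y hy a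
    have h := euler_aux (α := (1:ℝ)) (hdZd y hy a a) (fun t ht => by
      rw [Real.rpow_one]
      exact pd_hom2 hC (fun z hz => hZd z hz a) (fun z hz => hZhom' z hz a) hy ht
        (hD.conicC hy ht) a)
    rw [h, one_mul]
  -- contraction identity: y^i B_i equals the LHS of equation (4.8)
  have hBy : ∀ y ∈ C, ∑ i, y i * Bfield L Z y i
      = ((n : ℝ) + 2) * ∑ a, yLow L y a / L y * Z y a
        - 2 * ∑ a, meanCartan L a y * Z y a
        - ∑ a, pd (fun z => Z z a) a y := by
    intro y hy
    have e1 : ∑ i, y i * ((((n:ℝ)+2)/2) * ∑ a, yLow L y a / L y * pd (fun z => Z z a) i y)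
        = ((n:ℝ)+2) * ∑ a, yLow L y a / L y * Z y a := by
      calc ∑ i, y i * ((((n:ℝ)+2)/2) * ∑ a, yLow L y a / L y * pd (fun z => Z z a) i y)
          = (((n:ℝ)+2)/2) * ∑ i, y i * ∑ a, yLow L y a / L y * pd (fun z => Z z a) i y := by
            rw [Finset.mul_sum]
            exact Finset.sum_congr rfl fun i _ => by ring
        _ = (((n:ℝ)+2)/2) * ∑ a, yLow L y a / L y * ∑ i, y i * pd (fun z => Z z a) i y := by
            rw [sum_mul_sum_comm]
        _ = (((n:ℝ)+2)/2) * ∑ a, yLow L y a / L y * (2 * Z y a) := by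
            congr 1
            exact Finset.sum_congr rfl fun a _ => by rw [eulerZ y hy a]
        _ = ((n:ℝ)+2) * ∑ a, yLow L y a / L y * Z y a := by
            rw [Finset.mul_sum, Finset.mul_sum]
            exact Finset.sum_congr rfl fun a _ => by ring
    have e2 : ∑ i, y i * ∑ a, meanCartan L a y * pd (fun z => Z z a) i y
        = 2 * ∑ a, meanCartan L a y * Z y a := by
      calc ∑ i, y i * ∑ a, meanCartan L a y * pd (fun z => Z z a) i y
          = ∑ a, meanCartan L a y * ∑ i, y i * pd (fun z => Z z a) i y := by
            rw [sum_mul_sum_comm]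
        _ = ∑ a, meanCartan L a y * (2 * Z y a) := by
            exact Finset.sum_congr rfl fun a _ => by rw [eulerZ y hy a]
        _ = 2 * ∑ a, meanCartan L a y * Z y a := by
            rw [Finset.mul_sum]
            exact Finset.sum_congr rfl fun a _ => by ring
    have e3 : ∑ i, y i * ∑ a, pd (fun z => pd (fun w => Z w a) a z) i y
        = ∑ a, pd (fun z => Z z a) a y := by
      calc ∑ i, y i * ∑ a, pd (fun z => pd (fun w => Z w a) a z) i y
          = ∑ a, ∑ i, y i * pd (fun z => pd (fun w => Z w a) a z) i y := by
            simp only [Finset.mul_sum]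
            exact Finset.sum_comm
        _ = ∑ a, pd (fun z => Z z a) a y :=
            Finset.sum_congr rfl fun a _ => eulerψ y hy a
    simp only [Bfield, mul_sub, Finset.sum_sub_distrib]
    rw [e1, e2, e3]
  -- derivative-of-divergence identity given equation (4.8) on C
  have hpdφ : (∀ y ∈ C,
        ((n : ℝ) + 2) * ∑ a, yLow L y a / L y * Z y a
          - 2 * ∑ a, meanCartan L a y * Z y a
          - ∑ a, pd (fun z => Z z a) a y = 0) →
      ∀ y ∈ C, ∀ i : Fin n,
        pd (fun z => ((n : ℝ) + 2) * ∑ a, yLow L z a / L z * Z z a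
            - 2 * ∑ a, meanCartan L a z * Z z a) i y
          = ∑ a, pd (fun z => pd (fun w => Z w a) a z) i y := by
    intro h2 y hy i
    have hEv : (fun z => ((n : ℝ) + 2) * ∑ a, yLow L z a / L z * Z z a
        - 2 * ∑ a, meanCartan L a z * Z z a)
        =ᶠ[nhds y] (fun z => ∑ a, pd (fun w => Z w a) a z) := by
      filter_upwards [hC.mem_nhds hy] with z hz
      have := h2 z hz
      linarith
    have hps := pd_sum (F := fun a z => pd (fun w => Z w a) a z)
      (fun a => hdZd y hy a a) i
    calc pd (fun z => ((n : ℝ) + 2) * ∑ a, yLow L z a / L z * Z z a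
          - 2 * ∑ a, meanCartan L a z * Z z a) i y
        = pd (fun z => ∑ a, pd (fun w => Z w a) a z) i y :=
          congrArg (fun (T : (Fin n → ℝ) →L[ℝ] ℝ) => T (Pi.single i 1)) hEv.fderiv_eq
      _ = ∑ a, pd (fun z => pd (fun w => Z w a) a z) i y := hps
  constructor
  · -- Part (a) ↔ (b)
    constructor
    · intro ha y hy i
      set G : Fin n → ℝ := fun a => ℓ y a + Bfield L Z y a with hG
      have hy0 : y ≠ 0 := hD.nzC y hy
      obtain ⟨k, hk⟩ := Function.ne_iff.mp hy0
      have hk : y k ≠ 0 := hk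
      have hexp : ∀ i j : Fin n,
          (∑ a, G a * ((if a = i then (1:ℝ) else 0) * y j - y a * (if j = i then 1 else 0)))
            = G i * y j - (if j = i then (1:ℝ) else 0) * ∑ a, G a * y a := by
        intro i j
        simp only [mul_sub]
        rw [Finset.sum_sub_distrib]
        congr 1
        · rw [Finset.sum_eq_single i (fun a _ ha' => by simp [ha'])
            (fun h => absurd (Finset.mem_univ i) h)]
          simp
        · rw [Finset.mul_sum]
          exact Finset.sum_congr rfl fun a _ => by ring
      have hkey : ∀ i j : Fin n,
          G i * y j - (if j = i then (1:ℝ) else 0) * ∑ a, G a * y a = 0 := by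
        intro i j
        rw [← hexp i j]
        exact ha y hy i j
      have hne : ∀ i : Fin n, i ≠ k → G i = 0 := by
        intro i hik
        have h0 := hkey i k
        rw [if_neg (fun e => hik e.symm)] at h0
        have : G i * y k = 0 := by linarith
        exact (mul_eq_zero.mp this).resolve_right hk
      haveI : Nontrivial (Fin n) := Fin.nontrivial_iff_two_le.mpr hn
      obtain ⟨m, hm⟩ := exists_ne k
      have hsum0 : ∑ a, G a * y a = 0 := by
        have h0 := hkey m m
        rw [if_pos rfl, hne m hm] at h0
        linarith
      have hGk : G k = 0 := by
        have hsk : ∑ a, G a * y a = G k * y k := by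
          refine Finset.sum_eq_single k (fun a _ ha' => by rw [hne a ha', zero_mul])
            (fun h => absurd (Finset.mem_univ k) h)
        have : G k * y k = 0 := by rw [← hsk]; exact hsum0
        exact (mul_eq_zero.mp this).resolve_right hk
      by_cases hik : i = k
      · rw [hik]; exact hGk
      · exact hne i hik
    · intro hb y hy i j
      refine Finset.sum_eq_zero fun a _ => ?_
      rw [hb y hy a, zero_mul]
  · -- Part (b) ↔ (c)
    constructor
    · intro hb
      have hsec : ∀ y ∈ C,
          ((n : ℝ) + 2) * ∑ a, yLow L y a / L y * Z y a
            - 2 * ∑ a, meanCartan L a y * Z y a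
            - ∑ a, pd (fun z => Z z a) a y = 0 := by
        intro y hy
        have h0 : ∑ i, y i * (ℓ y i + Bfield L Z y i) = 0 :=
          Finset.sum_eq_zero fun i _ => by rw [hb y hy i, mul_zero]
        have h1 : ∑ i, y i * ℓ y i + ∑ i, y i * Bfield L Z y i = 0 := by
          rw [← Finset.sum_add_distrib]
          rw [← h0]
          exact Finset.sum_congr rfl fun i _ => by ring
        have h2 : ∑ i, y i * ℓ y i = 0 := by
          rw [← hℓy y hy]
          exact Finset.sum_congr rfl fun i _ => by ring
        have h3 : ∑ i, y i * Bfield L Z y i = 0 := by linarith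
        rw [← hBy y hy]
        exact h3
      refine ⟨?_, hsec⟩
      intro y hy i
      rw [hpdφ hsec y hy i]
      have hbi := hb y hy i
      simp only [Bfield] at hbi
      linarith
    · rintro ⟨h1, h2⟩ y hy i
      have hφ := hpdφ h2 y hy i
      have hcc := h1 y hy i
      rw [hφ] at hcc
      simp only [Bfield]
      linarith
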